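/- For every τ > 0, every n ≥ 1 and all x, x' ∈ ℝⁿ, the regularized softmax satisfies ‖S_τ(x) − S_τ(x')‖₁ ≤ (1/τ)‖x − x'‖_∞; that is, S_τ is (1/τ)-Lipschitz as a map from (ℝⁿ, ‖·‖_∞) to (ℝⁿ, ‖·‖₁). -/

import Mathlib

open Finset Real

/-- Weighted mean absolute deviation bound: if `p` is a probability vector and
`|v i| ≤ M`, then `∑ p i * |v i - ∑ p j * v j| ≤ M`. -/
lemma key_mean_abs {n : ℕ} (p v : Fin n → ℝ) (M : ℝ) (hM : 0 ≤ M)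
    (hp0 : ∀ i, 0 ≤ p i) (hp1 : ∑ i, p i = 1) (hv : ∀ i, |v i| ≤ M) :
    ∑ i, p i * |v i - ∑ j, p j * v j| ≤ M := by
  set S := ∑ j, p j * v j with hS
  set P := Finset.univ.filter (fun i : Fin n => S ≤ v i) with hP
  set Pc := Finset.univ.filter (fun i : Fin n => ¬ S ≤ v i) with hPc
  have hsplit : ∑ i, p i * |v i - S|
      = (∑ i ∈ P, p i * (v i - S)) + ∑ i ∈ Pc, p i * (S - v i) := by
    rw [← Finset.sum_filter_add_sum_filter_not Finset.univ (fun i => S ≤ v i)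
      (fun i => p i * |v i - S|)]
    congr 1
    · exact Finset.sum_congr rfl fun i hi => by
        rw [abs_of_nonneg (by linarith [(Finset.mem_filter.mp hi).2])]
    · exact Finset.sum_congr rfl fun i hi => by
        have := (Finset.mem_filter.mp hi).2
        rw [abs_of_neg (by push_neg at this; linarith), neg_sub]
  have hzero : (∑ i ∈ P, p i * (v i - S)) - ∑ i ∈ Pc, p i * (S - v i) = 0 := by
    have : (∑ i ∈ P, p i * (v i - S)) + ∑ i ∈ Pc, p i * (v i - S) = 0 := by
      rw [Finset.sum_filter_add_sum_filter_not Finset.univ (fun i => S ≤ v i)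
        (fun i => p i * (v i - S))]
      have : ∑ i, p i * (v i - S) = (∑ i, p i * v i) - (∑ i, p i) * S := by
        rw [Finset.sum_mul, ← Finset.sum_sub_distrib]; exact Finset.sum_congr rfl fun i _ => by ring
      rw [this, hp1, one_mul, ← hS, sub_self]
    have h2 : ∑ i ∈ Pc, p i * (S - v i) = - ∑ i ∈ Pc, p i * (v i - S) := by
      rw [← Finset.sum_neg_distrib]; exact Finset.sum_congr rfl fun i _ => by ring
    rw [h2]; linarith
  set q := ∑ i ∈ P, p i with hq
  set q' := ∑ i ∈ Pc, p i with hq'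
  set T := ∑ i ∈ P, p i * v i with hT
  set R := ∑ i ∈ Pc, p i * v i with hR
  have hqq' : q + q' = 1 := by
    rw [hq, hq', Finset.sum_filter_add_sum_filter_not]; exact hp1
  have hq0 : 0 ≤ q := Finset.sum_nonneg fun i _ => hp0 i
  have hq'0 : 0 ≤ q' := Finset.sum_nonneg fun i _ => hp0 i
  have hTR : T + R = S := by
    rw [hT, hR, Finset.sum_filter_add_sum_filter_not, hS]
  have hTle : T ≤ q * M := by
    rw [hq, Finset.sum_mul]
    exact Finset.sum_le_sum fun i _ => mul_le_mul_of_nonneg_left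
      (le_trans (le_abs_self _) (hv i)) (hp0 i)
  have hRge : -(q' * M) ≤ R := by
    rw [hq', Finset.sum_mul, ← Finset.sum_neg_distrib]
    exact Finset.sum_le_sum fun i _ => by
      have h1 : -M ≤ v i := neg_le_of_abs_le (hv i)
      nlinarith [hp0 i]
  have hPval : ∑ i ∈ P, p i * (v i - S) = T - q * S := by
    rw [hT, hq, Finset.sum_mul, ← Finset.sum_sub_distrib]
    exact Finset.sum_congr rfl fun i _ => by ring
  have htot : ∑ i, p i * |v i - S| = 2 * (T - q * S) := by
    rw [hsplit]; rw [hPval] at hzero ⊢; linarith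
  have hsub : T - q * S = (1 - q) * T - q * R := by rw [← hTR]; ring
  rw [htot, hsub]
  have h1 : (1 - q) * T ≤ (1 - q) * (q * M) :=
    mul_le_mul_of_nonneg_left hTle (by linarith)
  have hq'e : q' = 1 - q := by linarith
  have h2 : q * (-(q' * M)) ≤ q * R := mul_le_mul_of_nonneg_left hRge hq0
  rw [hq'e] at h2
  have h3 : 0 ≤ M * (1 - 2 * q) ^ 2 := mul_nonneg hM (sq_nonneg _)
  nlinarith [h1, h2, h3]

/-- For every `τ > 0`, `n ≥ 1` and `x, x' : Fin n → ℝ`, the regularized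
softmax `S_τ(x) i = exp (x i / τ) / ∑ j, exp (x j / τ)` satisfies
`‖S_τ x - S_τ x'‖₁ ≤ (1/τ) * ‖x - x'‖_∞`. -/
theorem stmt_0 (τ : ℝ) (hτ : 0 < τ) (n : ℕ) (hn : 1 ≤ n) (x x' : Fin n → ℝ) :
    ∑ i, |Real.exp (x i / τ) / (∑ j, Real.exp (x j / τ)) -
          Real.exp (x' i / τ) / (∑ j, Real.exp (x' j / τ))|
      ≤ (1 / τ) *
        (Finset.univ.sup' ⟨⟨0, hn⟩, Finset.mem_univ _⟩ fun i => |x i - x' i|) := by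
  set M : ℝ := Finset.univ.sup' ⟨⟨0, hn⟩, Finset.mem_univ _⟩ fun i => |x i - x' i| with hMdef
  have hMle : ∀ i, |x i - x' i| ≤ M := by
    intro i; rw [hMdef]; exact Finset.le_sup' (fun i => |x i - x' i|) (Finset.mem_univ i)
  have hM0 : 0 ≤ M := le_trans (abs_nonneg _) (hMle ⟨0, hn⟩)
  set v : Fin n → ℝ := fun i => x i - x' i with hv
  set u : ℝ → Fin n → ℝ := fun s i => (x' i + s * v i) / τ with hu
  set Z : ℝ → ℝ := fun s => ∑ j, Real.exp (u s j) with hZ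
  have hne : (Finset.univ : Finset (Fin n)).Nonempty := ⟨⟨0, hn⟩, Finset.mem_univ _⟩
  have hZpos : ∀ s, 0 < Z s := fun s =>
    Finset.sum_pos (fun j _ => Real.exp_pos _) hne
  set g₀ : ℝ → (Fin n → ℝ) := fun s i => Real.exp (u s i) / Z s with hg₀
  set d : ℝ → (Fin n → ℝ) := fun s i =>
    (1 / τ) * g₀ s i * (v i - ∑ j, g₀ s j * v j) with hd
  -- probability facts
  have hp0 : ∀ s i, 0 ≤ g₀ s i := fun s i =>
    div_nonneg (Real.exp_pos _).le (hZpos s).le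
  have hp1 : ∀ s, ∑ i, g₀ s i = 1 := fun s => by
    rw [hg₀]; rw [← Finset.sum_div]; exact div_self (hZpos s).ne'
  -- derivative of components of u
  have huder : ∀ (j : Fin n) (s : ℝ), HasDerivAt (fun t => u t j) (v j / τ) s := by
    intro j s
    have h : HasDerivAt (fun t : ℝ => (x' j + t * v j) / τ) ((1 * v j) / τ) s :=
      (((hasDerivAt_id s).mul_const (v j)).const_add (x' j)).div_const τ
    simpa using h
  have hZder : ∀ s, HasDerivAt Z (∑ j, Real.exp (u s j) * (v j / τ)) s := fun s =>
    HasDerivAt.fun_sum fun j _ => (huder j s).exp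
  have hgder : ∀ s, HasDerivAt g₀ (d s) s := by
    intro s
    rw [hasDerivAt_pi]
    intro i
    have hnum : HasDerivAt (fun t => Real.exp (u t i)) (Real.exp (u s i) * (v i / τ)) s :=
      (huder i s).exp
    have h := hnum.fun_div (hZder s) (hZpos s).ne'
    convert h using 1
    · rfl
    have hsum1 : ∑ j, g₀ s j * v j = (∑ j, Real.exp (u s j) * v j) / Z s := by
      rw [Finset.sum_div]
      exact Finset.sum_congr rfl fun j _ => by rw [hg₀]; ring
    have hsum2 : ∑ j, Real.exp (u s j) * (v j / τ) = (∑ j, Real.exp (u s j) * v j) / τ := by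
      rw [Finset.sum_div]
      exact Finset.sum_congr rfl fun j _ => by ring
    simp only [hd]
    rw [hsum1, hsum2]
    simp only [hg₀]
    have hZs := (hZpos s).ne'
    field_simp
  -- move to PiLp 1
  set e := (PiLp.continuousLinearEquiv 1 ℝ (fun _ : Fin n => ℝ)).symm with he
  set G : ℝ → PiLp 1 (fun _ : Fin n => ℝ) := fun s => e (g₀ s) with hG
  have hGder : ∀ s ∈ (Set.univ : Set ℝ), HasDerivWithinAt G (e (d s)) Set.univ s := by
    intro s _
    exact (e.toContinuousLinearMap.hasFDerivAt.comp_hasDerivAt s (hgder s)).hasDerivWithinAt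
  have hbound : ∀ s ∈ (Set.univ : Set ℝ), ‖e (d s)‖ ≤ (1 / τ) * M := by
    intro s _
    rw [PiLp.norm_eq_sum (by norm_num)]
    simp only [ENNReal.toReal_one, Real.rpow_one, one_div, inv_one, Real.norm_eq_abs]
    have heq : ∀ i : Fin n, |(e (d s) : Fin n → ℝ) i| = τ⁻¹ * (g₀ s i * |v i - ∑ j, g₀ s j * v j|) := by
      intro i
      have : (e (d s) : Fin n → ℝ) i = d s i := rfl
      rw [this, hd, abs_mul, abs_mul, abs_of_nonneg (hp0 s i),
        abs_of_nonneg (by positivity : (0:ℝ) ≤ 1/τ)]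
      ring
    rw [Finset.sum_congr rfl fun i _ => heq i, ← Finset.mul_sum]
    have := key_mean_abs (g₀ s) v M hM0 (hp0 s) (hp1 s) (fun i => hMle i)
    have hτinv : (0:ℝ) ≤ τ⁻¹ := by positivity
    exact mul_le_mul_of_nonneg_left this hτinv
  have hmvt := (convex_univ (𝕜 := ℝ) (E := ℝ)).norm_image_sub_le_of_norm_hasDerivWithin_le
    hGder hbound (Set.mem_univ (0:ℝ)) (Set.mem_univ (1:ℝ))
  have hnorm1 : ‖(1:ℝ) - 0‖ = 1 := by norm_num
  rw [hnorm1, mul_one] at hmvt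
  have hkey : ‖G 1 - G 0‖ = ∑ i, |Real.exp (x i / τ) / (∑ j, Real.exp (x j / τ)) -
      Real.exp (x' i / τ) / (∑ j, Real.exp (x' j / τ))| := by
    rw [PiLp.norm_eq_sum (by norm_num)]
    simp only [ENNReal.toReal_one, Real.rpow_one, one_div, inv_one, Real.norm_eq_abs]
    apply Finset.sum_congr rfl
    intro i _
    have h1 : ∀ j, u 1 j = x j / τ := fun j => by simp only [hu, hv]; ring
    have h0 : ∀ j, u 0 j = x' j / τ := fun j => by simp only [hu, hv]; ring
    have : (G 1 - G 0).ofLp i = g₀ 1 i - g₀ 0 i := rfl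
    rw [this]
    simp only [hg₀, hZ, h1, h0]
  rw [hkey] at hmvt
  calc _ ≤ (1 / τ) * M := hmvt
    _ = _ := rfl
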